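/- Under the same hypotheses (doubling condition π(B(θ,2u)) ≤ e^{γu}π(B(θ,u)) for all u ≥ r, with π(B(θ,u)) > 0, and γr ≥ 1), for every η > 0: ∫_Θ exp(−(2+η)γ ℓ(θ,θ')) dπ(θ') ≤ (1 − e^{−η})^{−1} π(B(θ,r)). -/

import Mathlib

open MeasureTheory

/-- Under the doubling condition at scale `r` and above, with `γr ≥ 1`, for every `η > 0`:
`∫_Θ exp(−(2+η)γ ℓ(θ,θ')) dπ(θ') ≤ (1 − e^{−η})⁻¹ π(B(θ,r))`. -/
theorem stmt5 {Θ : Type*} [MeasurableSpace Θ] (π : Measure Θ) [IsProbabilityMeasure π]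
    (ℓ : Θ → Θ → ℝ) (hℓ : ∀ θ θ', 0 ≤ ℓ θ θ') (θ : Θ)
    (hmeas : Measurable (fun θ' => ℓ θ θ'))
    (γ r : ℝ) (hγ : 0 < γ) (hr : 0 < r) (hγr : 1 ≤ γ * r)
    (hpos : ∀ u ≥ r, 0 < (π {θ' | ℓ θ θ' ≤ u}).toReal)
    (hdouble : ∀ u ≥ r,
      (π {θ' | ℓ θ θ' ≤ 2 * u}).toReal ≤ Real.exp (γ * u) * (π {θ' | ℓ θ θ' ≤ u}).toReal)
    (η : ℝ) (hη : 0 < η) :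
    ∫ θ', Real.exp (-((2 + η) * γ * ℓ θ θ')) ∂π ≤
      (1 - Real.exp (-η))⁻¹ * (π {θ' | ℓ θ θ' ≤ r}).toReal := by
  set f : Θ → ℝ := fun θ' => Real.exp (-((2 + η) * γ * ℓ θ θ')) with hf
  set c : ℝ := (2 + η) * γ with hc
  have hc0 : 0 < c := by positivity
  set B : ℕ → Set Θ := fun N => {θ' | ℓ θ θ' ≤ 2 ^ N * r} with hB
  have hBmeas : ∀ N, MeasurableSet (B N) := fun N =>
    hmeas measurableSet_Iic
  have hfmeas : Measurable f := (hmeas.const_mul _).neg.exp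
  have hfnonneg : ∀ x, 0 ≤ f x := fun x => Real.exp_pos _ |>.le
  have hfle1 : ∀ x, f x ≤ 1 := fun x => by
    rw [hf]
    simp only
    rw [← Real.exp_zero]
    apply Real.exp_le_exp.2
    have := hℓ θ x
    nlinarith
  have hfint : Integrable f π := by
    refine ⟨hfmeas.aestronglyMeasurable, ?_⟩
    apply MeasureTheory.HasFiniteIntegral.of_bounded (C := 1)
    filter_upwards with x
    rw [Real.norm_eq_abs, abs_of_nonneg (hfnonneg x)]
    exact hfle1 x
  set y : ℝ := Real.exp (-η) with hy
  have hy0 : 0 < y := Real.exp_pos _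
  have hy1 : y < 1 := by
    rw [hy, ← Real.exp_zero]
    exact Real.exp_lt_exp.2 (by linarith)
  -- iterated doubling bound
  have hdoub : ∀ N : ℕ, (π (B N)).toReal ≤
      Real.exp (γ * r * (2 ^ N - 1)) * (π (B 0)).toReal := by
    intro N
    induction N with
    | zero => simp
    | succ N ih =>
      have h2N : (2 : ℝ) ^ N * r ≥ r := by
        nlinarith [one_le_pow₀ (by norm_num : (1:ℝ) ≤ 2) (n := N)]
      have key := hdouble ((2:ℝ) ^ N * r) h2N
      have hEq : B (N + 1) = {θ' | ℓ θ θ' ≤ 2 * (2 ^ N * r)} := by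
        rw [hB]
        simp only
        congr 1
        ring_nf
      rw [hEq]
      calc (π {θ' | ℓ θ θ' ≤ 2 * (2 ^ N * r)}).toReal
          ≤ Real.exp (γ * (2 ^ N * r)) * (π (B N)).toReal := key
        _ ≤ Real.exp (γ * (2 ^ N * r)) *
            (Real.exp (γ * r * (2 ^ N - 1)) * (π (B 0)).toReal) := by
            apply mul_le_mul_of_nonneg_left ih (Real.exp_pos _).le
        _ = Real.exp (γ * r * (2 ^ (N + 1) - 1)) * (π (B 0)).toReal := by
            rw [← mul_assoc, ← Real.exp_add]
            congr 1
            ring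
  -- the key per-shell bound
  have hshell : ∀ N : ℕ,
      Real.exp (-(c * (2 ^ N * r))) * (π (B (N + 1))).toReal ≤
        y ^ (N + 1) * (π (B 0)).toReal := by
    intro N
    calc Real.exp (-(c * (2 ^ N * r))) * (π (B (N + 1))).toReal
        ≤ Real.exp (-(c * (2 ^ N * r))) *
          (Real.exp (γ * r * (2 ^ (N + 1) - 1)) * (π (B 0)).toReal) := by
          exact mul_le_mul_of_nonneg_left (hdoub (N + 1)) (Real.exp_pos _).le
      _ = Real.exp (γ * r * (-1 - η * 2 ^ N)) * (π (B 0)).toReal := by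
          rw [← mul_assoc, ← Real.exp_add]
          congr 2
          rw [hc]
          ring
      _ ≤ y ^ (N + 1) * (π (B 0)).toReal := by
          apply mul_le_mul_of_nonneg_right _ ENNReal.toReal_nonneg
          rw [hy, ← Real.exp_nat_mul]
          apply Real.exp_le_exp.2
          have h2N : (N : ℝ) + 1 ≤ 2 ^ N := by
            exact_mod_cast Nat.succ_le_of_lt (Nat.lt_two_pow_self (n := N))
          have hexp : -1 - η * 2 ^ N ≤ 0 := by nlinarith
          calc γ * r * (-1 - η * 2 ^ N) ≤ 1 * (-1 - η * 2 ^ N) := by nlinarith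
            _ ≤ (N + 1) * -η := by push_cast; nlinarith
            _ = ↑(N + 1) * -η := by push_cast; ring
  -- bound for integral over B N by partial geometric sums
  have hmain : ∀ N : ℕ, ∫ x in B N, f x ∂π ≤
      (∑ k ∈ Finset.range (N + 1), y ^ k) * (π (B 0)).toReal := by
    intro N
    induction N with
    | zero =>
      rw [Finset.range_one, Finset.sum_singleton, pow_zero, one_mul]
      calc ∫ x in B 0, f x ∂π ≤ ‖∫ x in B 0, f x ∂π‖ := le_abs_self _
        _ ≤ 1 * (π (B 0)).toReal := by
            apply norm_setIntegral_le_of_norm_le_const_ae' (measure_lt_top _ _)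
            filter_upwards with x _
            rw [Real.norm_eq_abs, abs_of_nonneg (hfnonneg x)]
            exact hfle1 x
        _ = (π (B 0)).toReal := one_mul _
    | succ N ih =>
      have hsub : B N ⊆ B (N + 1) := by
        intro x hx
        simp only [hB, Set.mem_setOf_eq] at hx ⊢
        have : (2:ℝ) ^ N * r ≤ 2 ^ (N + 1) * r := by
          apply mul_le_mul_of_nonneg_right _ hr.le
          exact pow_le_pow_right₀ (by norm_num) (Nat.le_succ N)
        linarith
      have hunion : B (N + 1) = B N ∪ (B (N + 1) \ B N) :=
        (Set.union_diff_cancel hsub).symm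
      have hdisj : Disjoint (B N) (B (N + 1) \ B N) := disjoint_sdiff_self_right
      have hdm : MeasurableSet (B (N + 1) \ B N) := (hBmeas (N + 1)).diff (hBmeas N)
      rw [hunion, setIntegral_union hdisj hdm hfint.integrableOn hfint.integrableOn]
      have hshell' : ∫ x in B (N + 1) \ B N, f x ∂π ≤ y ^ (N + 1) * (π (B 0)).toReal := by
        calc ∫ x in B (N + 1) \ B N, f x ∂π ≤ ‖∫ x in B (N + 1) \ B N, f x ∂π‖ := le_abs_self _
          _ ≤ Real.exp (-(c * (2 ^ N * r))) * (π (B (N + 1) \ B N)).toReal := by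
              apply norm_setIntegral_le_of_norm_le_const_ae' (measure_lt_top _ _)
              filter_upwards with x hx
              rw [Real.norm_eq_abs, abs_of_nonneg (hfnonneg x)]
              rw [hf]
              simp only
              apply Real.exp_le_exp.2
              have hxgt : 2 ^ N * r < ℓ θ x := by
                have := hx.2
                simp only [hB, Set.mem_setOf_eq] at this
                linarith [lt_of_not_ge this]
              rw [hc]
              nlinarith
          _ ≤ Real.exp (-(c * (2 ^ N * r))) * (π (B (N + 1))).toReal := by
              apply mul_le_mul_of_nonneg_left _ (Real.exp_pos _).le
              apply ENNReal.toReal_mono (measure_ne_top _ _)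
              exact measure_mono Set.diff_subset
          _ ≤ y ^ (N + 1) * (π (B 0)).toReal := hshell N
      calc (∫ x in B N, f x ∂π) + ∫ x in B (N + 1) \ B N, f x ∂π
          ≤ (∑ k ∈ Finset.range (N + 1), y ^ k) * (π (B 0)).toReal +
            y ^ (N + 1) * (π (B 0)).toReal := add_le_add ih hshell'
        _ = (∑ k ∈ Finset.range (N + 2), y ^ k) * (π (B 0)).toReal := by
            rw [Finset.sum_range_succ (fun k => y ^ k) (N + 1)]; ring
  -- geometric sum bound
  have hgeom : ∀ N : ℕ, (∑ k ∈ Finset.range N, y ^ k) ≤ (1 - y)⁻¹ := by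
    intro N
    have hyN : 0 ≤ y ^ N := pow_nonneg hy0.le N
    have h1y : 0 < 1 - y := by linarith
    rw [geom_sum_eq (ne_of_lt hy1), div_le_iff_of_neg (by linarith : y - 1 < 0)]
    have hm1 : (1 - y)⁻¹ * (y - 1) = -1 := by field_simp; ring
    nlinarith
  -- tail bound and passing to the limit
  have htail : ∀ N : ℕ, ∫ x, f x ∂π ≤
      (1 - y)⁻¹ * (π (B 0)).toReal + Real.exp (-(c * (2 ^ N * r))) := by
    intro N
    rw [← integral_add_compl (hBmeas N) hfint]
    have h1 : ∫ x in B N, f x ∂π ≤ (1 - y)⁻¹ * (π (B 0)).toReal :=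
      le_trans (hmain N) (mul_le_mul_of_nonneg_right (hgeom (N + 1)) ENNReal.toReal_nonneg)
    have h2 : ∫ x in (B N)ᶜ, f x ∂π ≤ Real.exp (-(c * (2 ^ N * r))) := by
      calc ∫ x in (B N)ᶜ, f x ∂π ≤ ‖∫ x in (B N)ᶜ, f x ∂π‖ := le_abs_self _
        _ ≤ Real.exp (-(c * (2 ^ N * r))) * (π (B N)ᶜ).toReal := by
            apply norm_setIntegral_le_of_norm_le_const_ae' (measure_lt_top _ _)
            filter_upwards with x hx
            rw [Real.norm_eq_abs, abs_of_nonneg (hfnonneg x)]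
            rw [hf]
            simp only
            apply Real.exp_le_exp.2
            have hxgt : 2 ^ N * r < ℓ θ x := by
              simp only [hB, Set.mem_compl_iff, Set.mem_setOf_eq] at hx
              linarith [lt_of_not_ge hx]
            rw [hc]
            nlinarith
        _ ≤ Real.exp (-(c * (2 ^ N * r))) * 1 := by
            apply mul_le_mul_of_nonneg_left _ (Real.exp_pos _).le
            have : π (B N)ᶜ ≤ 1 := le_trans (measure_mono (Set.subset_univ _)) (by simp)
            calc (π (B N)ᶜ).toReal ≤ (1 : ENNReal).toReal :=
                ENNReal.toReal_mono (by simp) this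
              _ = 1 := by simp
        _ = Real.exp (-(c * (2 ^ N * r))) := mul_one _
    linarith
  have hB0 : B 0 = {θ' | ℓ θ θ' ≤ r} := by
    rw [hB]; simp
  have hlim : Filter.Tendsto
      (fun N : ℕ => (1 - y)⁻¹ * (π (B 0)).toReal + Real.exp (-(c * (2 ^ N * r))))
      Filter.atTop (nhds ((1 - y)⁻¹ * (π (B 0)).toReal + 0)) := by
    apply Filter.Tendsto.const_add
    apply Real.tendsto_exp_atBot.comp
    apply Filter.tendsto_neg_atBot_iff.mpr
    have : Filter.Tendsto (fun N : ℕ => (2:ℝ) ^ N) Filter.atTop Filter.atTop :=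
      tendsto_pow_atTop_atTop_of_one_lt (by norm_num)
    have h : Filter.Tendsto (fun N : ℕ => c * (2 ^ N * r)) Filter.atTop Filter.atTop := by
      apply Filter.Tendsto.const_mul_atTop hc0
      exact Filter.Tendsto.atTop_mul_const hr this
    exact h
  have := ge_of_tendsto' hlim htail
  rw [add_zero] at this
  rw [← hB0]
  exact this
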